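/- Let R be a commutative ring, N an even natural number, and A an N×N matrix over R (0-indexed) such that A i j = 0 whenever j ≠ i and i + j ≠ N − 1 (i.e. A is supported on the diagonal and the anti-diagonal). Then the characteristic polynomial of A equals ∏_{i=0}^{N/2 − 1} ((X − C(A i i))·(X − C(A (N−1−i) (N−1−i))) − C(A i (N−1−i))·C(A (N−1−i) i)), where C denotes the constant-polynomial embedding. -/
import Mathlib


open Matrix BigOperators Polynomial

/-- The characteristic polynomial of a matrix supported on the diagonal and anti-diagonal
is the product of the characteristic polynomials of the 2×2 blocks pairing index `i`
with its reversal `N−1−i`. -/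
theorem stmt12 {R : Type*} [CommRing R] (N : ℕ) (hN : Even N)
    (A : Matrix (Fin N) (Fin N) R)
    (hA : ∀ i j : Fin N, j ≠ i → (i : ℕ) + (j : ℕ) ≠ N - 1 → A i j = 0) :
    A.charpoly = ∏ i : Fin (N / 2),
      ((X - C (A ⟨i, by have := i.isLt; omega⟩ ⟨i, by have := i.isLt; omega⟩)) *
        (X - C (A ⟨N - 1 - i, by have := i.isLt; omega⟩ ⟨N - 1 - i, by have := i.isLt; omega⟩))
       - C (A ⟨i, by have := i.isLt; omega⟩ ⟨N - 1 - i, by have := i.isLt; omega⟩) *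
         C (A ⟨N - 1 - i, by have := i.isLt; omega⟩ ⟨i, by have := i.isLt; omega⟩)) := by
  have h2 : N / 2 * 2 = N := Nat.div_mul_cancel hN.two_dvd
  have hlt1 : ∀ k : Fin (N / 2), (k : ℕ) < N := fun k => by have := k.isLt; omega
  have hlt2 : ∀ k : Fin (N / 2), N - 1 - (k : ℕ) < N := fun k => by have := k.isLt; omega
  let f : Fin 2 × Fin (N / 2) → Fin N := fun p =>
    if p.1 = 0 then ⟨p.2, hlt1 p.2⟩ else ⟨N - 1 - p.2, hlt2 p.2⟩
  have hf0 : ∀ k : Fin (N / 2), f (0, k) = ⟨k, hlt1 k⟩ := fun k => rfl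
  have hf1 : ∀ k : Fin (N / 2), f (1, k) = ⟨N - 1 - k, hlt2 k⟩ := fun k => rfl
  have hzero : ∀ i j : Fin N, i ≠ j → (i : ℕ) + (j : ℕ) ≠ N - 1 → charmatrix A i j = 0 := by
    intro i j h1 h2
    rw [charmatrix_apply_ne _ _ _ h1, hA i j h1.symm h2, map_zero, neg_zero]
  have hf : Function.Bijective f := by
    rw [Fintype.bijective_iff_injective_and_card]
    constructor
    · rintro ⟨i, k⟩ ⟨j, l⟩ h
      have hk := k.isLt; have hl := l.isLt
      fin_cases i <;> fin_cases j <;>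
        simp only [Fin.mk_zero, Fin.mk_one, hf0, hf1, Fin.mk.injEq] at h <;>
        simp only [Prod.mk.injEq, Fin.mk_zero, Fin.mk_one, Fin.ext_iff, Fin.val_zero,
          Fin.val_one] <;>
        first
          | exact ⟨trivial, by omega⟩
          | omega
    · simp; omega
  let e := Equiv.ofBijective f hf
  let B : Fin (N / 2) → Matrix (Fin 2) (Fin 2) R[X] := fun k =>
    !![X - C (A ⟨k, hlt1 k⟩ ⟨k, hlt1 k⟩), -C (A ⟨k, hlt1 k⟩ ⟨N - 1 - k, hlt2 k⟩);
       -C (A ⟨N - 1 - k, hlt2 k⟩ ⟨k, hlt1 k⟩), X - C (A ⟨N - 1 - k, hlt2 k⟩ ⟨N - 1 - k, hlt2 k⟩)]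
  have hblock : (charmatrix A).submatrix e e = Matrix.blockDiagonal B := by
    apply Matrix.ext
    rintro ⟨i, k⟩ ⟨j, l⟩
    have hk := k.isLt; have hl := l.isLt
    have he : ∀ p, e p = f p := fun p => rfl
    simp only [submatrix_apply, blockDiagonal_apply, he]
    by_cases hkl : k = l
    · subst hkl
      rw [if_pos rfl]
      have hne : (⟨(k : ℕ), hlt1 k⟩ : Fin N) ≠ ⟨N - 1 - k, hlt2 k⟩ :=
        Fin.ne_of_val_ne (by simp only [Fin.val_mk]; omega)
      fin_cases i <;> fin_cases j <;>
        simp only [Fin.mk_zero, Fin.mk_one, hf0, hf1]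
      · rw [charmatrix_apply_eq]; simp [B]
      · rw [charmatrix_apply_ne _ _ _ hne]; simp [B]
      · rw [charmatrix_apply_ne _ _ _ hne.symm]; simp [B]
      · rw [charmatrix_apply_eq]; simp [B]
    · rw [if_neg hkl]
      have hkl' : (k : ℕ) ≠ (l : ℕ) := fun h => hkl (Fin.ext h)
      fin_cases i <;> fin_cases j <;>
        simp only [Fin.mk_zero, Fin.mk_one, hf0, hf1] <;>
        exact hzero _ _ (Fin.ne_of_val_ne (by simp only [Fin.val_mk]; omega)) (by simp only [Fin.val_mk]; omega)
  calc A.charpoly = ((charmatrix A).submatrix e e).det :=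
        (Matrix.det_submatrix_equiv_self e _).symm
    _ = (Matrix.blockDiagonal B).det := by rw [hblock]
    _ = ∏ k : Fin (N / 2), (B k).det := Matrix.det_blockDiagonal B
    _ = _ := by
        refine Finset.prod_congr rfl fun k _ => ?_
        rw [Matrix.det_fin_two_of, neg_mul_neg]
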